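/- If w is 321-avoiding, then for any t with t < w_t ≤ j and any (i,j) ∈ D(w), one has t < i; moreover if w_t ≤ t < i and (i,j) ∈ D(w), then w_t ≤ j. -/
import Mathlib


open Finset

/-- The Rothe diagram of `w` (0-based): squares `(i,j)` with `w i > j` and `w⁻¹ j > i`. -/
def RD {n : ℕ} (w : Equiv.Perm (Fin n)) : Finset (Fin n × Fin n) :=
  Finset.univ.filter (fun p => p.2 < w p.1 ∧ p.1 < w⁻¹ p.2)

/-- `m_{ij}(w)`: the number of squares of `D(w)` in row `i` weakly left of column `j`. -/
def mStat {n : ℕ} (w : Equiv.Perm (Fin n)) (i j : Fin n) : ℕ :=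
  ((RD w).filter (fun p => p.1 = i ∧ p.2 ≤ j)).card

/-- `w` avoids the pattern 321. -/
def Avoids321 {n : ℕ} (w : Equiv.Perm (Fin n)) : Prop :=
  ¬ ∃ i1 i2 i3 : Fin n, i1 < i2 ∧ i2 < i3 ∧ w i3 < w i2 ∧ w i2 < w i1

/-- For 321-avoiding `w` and `(i,j) ∈ D(w)`: if `t < w_t ≤ j` then `t < i`;
and if `w_t ≤ t < i` then `w_t ≤ j`. -/
theorem stmt3 {n : ℕ} (w : Equiv.Perm (Fin n)) (h321 : Avoids321 w)
    (i j : Fin n) (hij : (i, j) ∈ RD w) :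
    (∀ t : Fin n, t < w t → w t ≤ j → t < i) ∧
    (∀ t : Fin n, w t ≤ t → t < i → w t ≤ j) := by
  simp only [RD, mem_filter, mem_univ, true_and] at hij
  obtain ⟨hjwi, hik⟩ := hij
  set k := w⁻¹ j with hkdef
  have hwk : w k = j := by simp [hkdef]
  constructor
  · intro t htwt hwtj
    by_contra hti
    push_neg at hti  -- i ≤ t
    -- i ≠ t since w i > j ≥ w t
    have hit : i < t := by
      rcases lt_or_eq_of_le hti with h | h
      · exact h
      · exfalso; rw [h] at hjwi; exact absurd (lt_of_le_of_lt hwtj hjwi) (lt_irrefl _)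
    -- pigeonhole: ∃ s > t, w s < w t
    have hs : ∃ s, t < s ∧ w s < w t := by
      by_contra hc
      push_neg at hc
      have hmaps : ∀ s ∈ Ioi t, w s ∈ Ioi (w t) := by
        intro s hs'
        rw [mem_Ioi] at hs' ⊢
        have := hc s hs'
        have hne : w s ≠ w t := fun h => (ne_of_gt hs') (w.injective h)
        exact lt_of_le_of_ne this (Ne.symm hne)
      have hcard := Finset.card_le_card_of_injOn w hmaps
        (w.injective.injOn)
      rw [Fin.card_Ioi, Fin.card_Ioi] at hcard
      have h1 : (t : ℕ) < (w t : ℕ) := htwt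
      have h2 : (w t : ℕ) < n := (w t).isLt
      omega
    obtain ⟨s, hts, hws⟩ := hs
    exact h321 ⟨i, t, s, hit, hts, hws, lt_of_le_of_lt hwtj hjwi⟩
  · intro t hwtt hti
    by_contra hjwt
    push_neg at hjwt  -- j < w t
    have htk : t < k := lt_trans hti hik
    -- pigeonhole: ∃ s < t, w t < w s
    have hs : ∃ s, s < t ∧ w t < w s := by
      by_contra hc
      push_neg at hc
      have hmaps : ∀ s ∈ insert k (Iio t), w s ∈ Iio (w t) := by
        intro s hs'
        rw [mem_insert, mem_Iio] at hs'
        rw [mem_Iio]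
        rcases hs' with h | h
        · rw [h, hwk]; exact hjwt
        · have := hc s h
          have hne : w s ≠ w t := fun he => (ne_of_lt h) (w.injective he)
          exact lt_of_le_of_ne this hne
      have hcard := Finset.card_le_card_of_injOn w hmaps
        (w.injective.injOn)
      rw [Finset.card_insert_of_notMem (by rw [mem_Iio]; exact not_lt.mpr (le_of_lt htk)),
        Fin.card_Iio, Fin.card_Iio] at hcard
      have h1 : (w t : ℕ) ≤ (t : ℕ) := hwtt
      omega
    obtain ⟨s, hst, hws⟩ := hs
    refine h321 ⟨s, t, k, hst, htk, ?_, hws⟩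
    rw [hwk]; exact hjwt
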